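/- Suppose ad > bc, Δ_Δ ≥ 0, and h(x_Δ^+) < 0 < h(x_Δ^−). Then for every integer n with n > n^−, the polynomial W_n has at least one real root; if in addition Δ_g ≥ 0, then W_n has at least two distinct real roots. -/

import Mathlib

open Polynomial

lemma poly_ivt {p : Polynomial ℝ} {u v : ℝ} (huv : u < v)
    (h1 : p.eval u < 0) (h2 : 0 < p.eval v) :
    ∃ x, u < x ∧ x < v ∧ p.IsRoot x := by
  have hc : ContinuousOn (fun x => p.eval x) (Set.Icc u v) :=
    (p.continuous_aeval).continuousOn
  have h0 : (0:ℝ) ∈ Set.Ioo (p.eval u) (p.eval v) := ⟨h1, h2⟩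
  obtain ⟨x, hx, hfx⟩ := intermediate_value_Ioo (le_of_lt huv) hc h0
  exact ⟨x, hx.1, hx.2, hfx⟩

lemma poly_ivt' {p : Polynomial ℝ} {u v : ℝ} (huv : u < v)
    (h1 : 0 < p.eval u) (h2 : p.eval v < 0) :
    ∃ x, u < x ∧ x < v ∧ p.IsRoot x := by
  obtain ⟨x, hx1, hx2, hx3⟩ := poly_ivt (p := -p) huv (by simpa) (by simpa)
  exact ⟨x, hx1, hx2, by simpa [IsRoot] using hx3⟩

lemma eval_W_delta (a b c d : ℝ) (W : ℕ → Polynomial ℝ)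
    (hW0 : W 0 = 1) (hW1 : W 1 = X)
    (hW : ∀ n : ℕ, W (n + 2) = (C a * X + C b) * W (n + 1) + (C c * X + C d) * W n)
    (x A h : ℝ) (hA : A = a * x + b) (hh : h = 2 * x - A)
    (hdelta : A ^ 2 + 4 * (c * x + d) = 0) :
    ∀ n : ℕ, 2 ^ (n+1) * (W (n+1)).eval x = (A + ((n:ℝ)+1) * h) * A ^ n := by
  subst hh hA
  have key : ∀ n : ℕ,
      2 ^ (n+1) * (W (n+1)).eval x
        = ((a*x+b) + ((n:ℝ)+1) * (2*x-(a*x+b))) * (a*x+b) ^ n ∧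
      2 ^ (n+2) * (W (n+2)).eval x
        = ((a*x+b) + ((n:ℝ)+2) * (2*x-(a*x+b))) * (a*x+b) ^ (n+1) := by
    intro n
    induction n with
    | zero =>
      constructor
      · simp [hW1]
      · rw [hW 0, hW0, hW1]
        simp only [eval_add, eval_mul, eval_C, eval_X, eval_one, Nat.cast_zero]
        linear_combination hdelta
    | succ m ih =>
      obtain ⟨h1, h2⟩ := ih
      refine ⟨by push_cast; linarith [h2], ?_⟩
      have h3 : W (m + 3) = (C a * X + C b) * W (m + 2) + (C c * X + C d) * W (m+1) := hW (m+1)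
      rw [show m + 1 + 2 = m + 3 from rfl, h3]
      simp only [eval_add, eval_mul, eval_C, eval_X]
      push_cast
      linear_combination (2*(a*x+b)) * h2 + (4*(c*x+d)) * h1
        + (((a*x+b)+((m:ℝ)+1)*(2*x-(a*x+b)))*(a*x+b)^m) * hdelta
  exact fun n => (key n).1

lemma eval_W_fix (a b c d : ℝ) (W : ℕ → Polynomial ℝ)
    (hW0 : W 0 = 1) (hW1 : W 1 = X)
    (hW : ∀ n : ℕ, W (n + 2) = (C a * X + C b) * W (n + 1) + (C c * X + C d) * W n)
    (z : ℝ) (hz : (a - 1) * z ^ 2 + (b + c) * z + d = 0) :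
    ∀ n : ℕ, (W n).eval z = z ^ n := by
  have key : ∀ n : ℕ, (W n).eval z = z ^ n ∧ (W (n+1)).eval z = z ^ (n+1) := by
    intro n
    induction n with
    | zero => exact ⟨by simp [hW0], by simp [hW1]⟩
    | succ m ih =>
      obtain ⟨h1, h2⟩ := ih
      refine ⟨h2, ?_⟩
      rw [show m + 1 + 1 = m + 2 from rfl, hW m]
      simp only [eval_add, eval_mul, eval_C, eval_X]
      rw [h1, h2]
      linear_combination (z ^ m) * hz
  exact fun n => (key n).1

lemma eval_W_zero_nonneg (a b c d : ℝ) (hb : 0 < b) (hd : 0 < d)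
    (W : ℕ → Polynomial ℝ)
    (hW0 : W 0 = 1) (hW1 : W 1 = X)
    (hW : ∀ n : ℕ, W (n + 2) = (C a * X + C b) * W (n + 1) + (C c * X + C d) * W n) :
    ∀ n : ℕ, 0 ≤ (W n).eval 0 ∧ 0 ≤ (W (n+1)).eval 0 := by
  intro n
  induction n with
  | zero => exact ⟨by simp [hW0], by simp [hW1]⟩
  | succ m ih =>
    obtain ⟨h1, h2⟩ := ih
    refine ⟨h2, ?_⟩
    rw [show m + 1 + 1 = m + 2 from rfl, hW m]
    simp only [eval_add, eval_mul, eval_C, eval_X]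
    nlinarith

lemma eval_W_zero_pos (a b c d : ℝ) (hb : 0 < b) (hd : 0 < d)
    (W : ℕ → Polynomial ℝ)
    (hW0 : W 0 = 1) (hW1 : W 1 = X)
    (hW : ∀ n : ℕ, W (n + 2) = (C a * X + C b) * W (n + 1) + (C c * X + C d) * W n) :
    ∀ n : ℕ, 0 < (W (n+2)).eval 0 := by
  intro n
  induction n with
  | zero => rw [hW 0, hW0, hW1]; simp; positivity
  | succ m ih =>
    have hn := eval_W_zero_nonneg a b c d hb hd W hW0 hW1 hW (m+1)
    rw [hW (m+1)]
    simp only [eval_add, eval_mul, eval_C, eval_X]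
    nlinarith [hn.1, ih]

set_option maxHeartbeats 4000000 in
/-- If `a*d > b*c`, `ΔΔ ≥ 0` and `h(xΔ⁺) < 0 < h(xΔ⁻)`, then for every `n > n⁻`
the polynomial `W n` has at least one real root; if moreover `Δg ≥ 0`, then
`W n` has at least two distinct real roots. -/
theorem stmt_19 (a b c d : ℝ) (ha : 0 < a) (hb : 0 < b) (hc : 0 < c) (hd : 0 < d)
    (W : ℕ → Polynomial ℝ)
    (hW0 : W 0 = 1) (hW1 : W 1 = X)
    (hW : ∀ n : ℕ, W (n + 2) = (C a * X + C b) * W (n + 1) + (C c * X + C d) * W n)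
    (DD Dg : ℝ)
    (hDD : DD = -a ^ 2 * d + a * b * c + c ^ 2)
    (hDg : Dg = (b + c) ^ 2 + 4 * d * (1 - a))
    (xdm xdp : ℝ)
    (hxdm : xdm = (-(a * b) - 2 * c - 2 * Real.sqrt DD) / a ^ 2)
    (hxdp : xdp = (-(a * b) - 2 * c + 2 * Real.sqrt DD) / a ^ 2)
    (nminus : ℝ) (hnminus : nminus = -(a * xdm + b) / ((2 - a) * xdm - b))
    (had : b * c < a * d) (hDD0 : 0 ≤ DD)
    (hhp : (2 - a) * xdp - b < 0) (hhm : 0 < (2 - a) * xdm - b) :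
    ∀ n : ℕ, nminus < (n : ℝ) →
      (∃ x : ℝ, (W n).IsRoot x) ∧
      (0 ≤ Dg → ∃ x y : ℝ, x ≠ y ∧ (W n).IsRoot x ∧ (W n).IsRoot y) := by
  intro n hn
  set s := Real.sqrt DD with hs
  have hs0 : 0 ≤ s := Real.sqrt_nonneg _
  have hs2 : s ^ 2 = DD := Real.sq_sqrt hDD0
  have ha0 : a ≠ 0 := ne_of_gt ha
  have ha2 : (0:ℝ) < a ^ 2 := by positivity
  -- basic structural facts
  have hmlep : xdm ≤ xdp := by
    rw [hxdm, hxdp]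
    exact (div_le_div_iff_of_pos_right ha2).mpr (by linarith)
  have hmp : xdm < xdp := by
    rcases lt_or_eq_of_le hmlep with h | h
    · exact h
    · rw [h] at hhm; linarith
  have haa : 2 < a := by
    by_contra hcon
    push_neg at hcon
    linarith [mul_le_mul_of_nonneg_left (le_of_lt hmp) (show (0:ℝ) ≤ 2 - a by linarith)]
  have hsc : s < c := by
    by_contra hcon
    push_neg at hcon
    linarith [hs2, mul_self_le_mul_self hc.le hcon, mul_pos ha (sub_pos.mpr had)]
  -- values of A at the two points
  have hAm2 : a ^ 2 * xdm = -(a*b) - 2*c - 2*s := by rw [hxdm]; field_simp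
  have hAp2 : a ^ 2 * xdp = -(a*b) - 2*c + 2*s := by rw [hxdp]; field_simp
  have hAmneg : a * xdm + b < 0 := by
    have heq : a^2*(a*xdm+b) = -2*(a*c) - 2*(a*s) := by linear_combination a*hAm2
    by_contra hcon
    push_neg at hcon
    linarith [mul_nonneg ha2.le hcon, heq, mul_pos ha hc, mul_nonneg ha.le hs0]
  have hApneg : a * xdp + b < 0 := by
    have heq : a^2*(a*xdp+b) = -2*(a*(c-s)) := by linear_combination a*hAp2
    by_contra hcon
    push_neg at hcon
    linarith [mul_nonneg ha2.le hcon, heq, mul_pos ha (sub_pos.mpr hsc)]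
  have hxdm0 : xdm < 0 := by
    by_contra hcon
    push_neg at hcon
    linarith [mul_nonneg ha.le hcon]
  have hxdp0 : xdp < 0 := by
    by_contra hcon
    push_neg at hcon
    linarith [mul_nonneg ha.le hcon]
  -- the discriminant vanishes at xdm and xdp
  have hdm : (a * xdm + b) ^ 2 + 4 * (c * xdm + d) = 0 := by
    have key : ((a^2*xdm) + a*b)^2 + 4*c*(a^2*xdm) + 4*d*a^2 = 0 := by
      rw [hAm2]; linear_combination 4 * hs2 + 4 * hDD
    have h2 : a^2 * ((a * xdm + b) ^ 2 + 4 * (c * xdm + d)) = 0 := by linear_combination key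
    rcases mul_eq_zero.mp h2 with h | h
    · exact absurd h (ne_of_gt ha2)
    · exact h
  have hdp : (a * xdp + b) ^ 2 + 4 * (c * xdp + d) = 0 := by
    have key : ((a^2*xdp) + a*b)^2 + 4*c*(a^2*xdp) + 4*d*a^2 = 0 := by
      rw [hAp2]; linear_combination 4 * hs2 + 4 * hDD
    have h2 : a^2 * ((a * xdp + b) ^ 2 + 4 * (c * xdp + d)) = 0 := by linear_combination key
    rcases mul_eq_zero.mp h2 with h | h
    · exact absurd h (ne_of_gt ha2)
    · exact h
  -- closed forms at xdm, xdp
  have Em := eval_W_delta a b c d W hW0 hW1 hW xdm (a*xdm+b) ((2-a)*xdm-b) rfl (by ring) hdm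
  have Ep := eval_W_delta a b c d W hW0 hW1 hW xdp (a*xdp+b) ((2-a)*xdp-b) rfl (by ring) hdp
  -- nminus > 1, hence n ≥ 2
  have hnm1 : 1 < nminus := by
    rw [hnminus]
    rw [lt_div_iff₀ hhm]
    linarith
  have hn2 : 2 ≤ n := by
    by_contra hcon
    push_neg at hcon
    have h1 : (n:ℝ) ≤ 1 := by exact_mod_cast Nat.lt_succ_iff.mp hcon
    linarith
  obtain ⟨k, rfl⟩ : ∃ k, n = k + 2 := ⟨n - 2, by omega⟩
  -- sign of the linear factor at xdm : positive since n > nminus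
  have hfacm : 0 < (a*xdm+b) + (((k+1:ℕ):ℝ)+1) * ((2-a)*xdm-b) := by
    have h5 : nminus < (k:ℝ) + 2 := by exact_mod_cast hn
    rw [hnminus, div_lt_iff₀ hhm] at h5
    push_cast
    linarith
  -- sign of the linear factor at xdp : always negative
  have hfacp : (a*xdp+b) + (((k+1:ℕ):ℝ)+1) * ((2-a)*xdp-b) < 0 := by
    have hk0 : (0:ℝ) ≤ (k:ℝ) * -((2-a)*xdp-b) := mul_nonneg (Nat.cast_nonneg k) (by linarith)
    push_cast
    linarith
  have h2pow : (0:ℝ) < 2 ^ (k+1+1) := by positivity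
  have hW0pos : 0 < (W (k+2)).eval 0 := eval_W_zero_pos a b c d hb hd W hW0 hW1 hW k
  rcases Nat.even_or_odd (k+1) with hpar | hpar
  · -- k+1 even : n = k+2 odd; eval at xdm > 0, at xdp < 0
    have hpm : 0 < (a*xdm+b) ^ (k+1) := hpar.pow_pos (ne_of_lt hAmneg)
    have hpp : 0 < (a*xdp+b) ^ (k+1) := hpar.pow_pos (ne_of_lt hApneg)
    have hevm : 0 < (W (k+2)).eval xdm := by
      have h' : 0 < 2 ^ (k+1+1) * (W (k+1+1)).eval xdm := by
        rw [Em (k+1)]; exact mul_pos hfacm hpm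
      by_contra hcon
      push_neg at hcon
      linarith [mul_nonpos_of_nonneg_of_nonpos h2pow.le hcon]
    have hevp : (W (k+2)).eval xdp < 0 := by
      have h' : 2 ^ (k+1+1) * (W (k+1+1)).eval xdp < 0 := by
        rw [Ep (k+1)]; exact mul_neg_of_neg_of_pos hfacp hpp
      by_contra hcon
      push_neg at hcon
      linarith [mul_nonneg h2pow.le hcon]
    obtain ⟨x, hx1, hx2, hx3⟩ := poly_ivt' hmp hevm hevp
    obtain ⟨y, hy1, hy2, hy3⟩ := poly_ivt hxdp0 hevp hW0pos
    exact ⟨⟨x, hx3⟩, fun _ => ⟨x, y, by linarith, hx3, hy3⟩⟩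
  · -- k+1 odd : n = k+2 even; eval at xdm < 0
    have hpm : (a*xdm+b) ^ (k+1) < 0 := hpar.pow_neg hAmneg
    have hevm : (W (k+2)).eval xdm < 0 := by
      have h' : 2 ^ (k+1+1) * (W (k+1+1)).eval xdm < 0 := by
        rw [Em (k+1)]; exact mul_neg_of_pos_of_neg hfacm hpm
      by_contra hcon
      push_neg at hcon
      linarith [mul_nonneg h2pow.le hcon]
    obtain ⟨y, hy1, hy2, hy3⟩ := poly_ivt hxdm0 hevm hW0pos
    refine ⟨⟨y, hy3⟩, fun hDg0 => ?_⟩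
    -- use a root z of (a-1) z² + (b+c) z + d, with z < xdm and W n (z) = zⁿ > 0
    set r := Real.sqrt Dg with hr
    have hr0 : 0 ≤ r := Real.sqrt_nonneg _
    have hr2 : r ^ 2 = Dg := Real.sq_sqrt hDg0
    set z := (-(b+c) - r) / (2*(a-1)) with hz
    have ha1 : (0:ℝ) < 2*(a-1) := by linarith
    have hz2 : 2*(a-1) * z = -(b+c) - r := by rw [hz]; field_simp; exact mul_div_cancel_left₀ _ (show a - 1 ≠ 0 by linarith)
    have hgz : (a - 1) * z ^ 2 + (b + c) * z + d = 0 := by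
      have key : (2*(a-1)*z) ^ 2 + 2*(b+c) * (2*(a-1)*z) + 4*d*(a-1) = 0 := by
        rw [hz2]; linear_combination hr2 + hDg
      have h2 : (4*(a-1)) * ((a - 1) * z ^ 2 + (b + c) * z + d) = 0 := by linear_combination key
      rcases mul_eq_zero.mp h2 with h | h
      · linarith
      · exact h
    have hzneg : z < 0 := by
      rw [hz]
      apply div_neg_of_neg_of_pos _ ha1
      linarith
    -- g(xdm) = -(h_m)²/4 < 0 hence xdm lies strictly between the roots of g
    have hgxdm : 4 * ((a - 1) * xdm ^ 2 + (b + c) * xdm + d) = -((2-a)*xdm-b)^2 := by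
      linear_combination hdm
    have hzxdm : z < xdm := by
      have hid : (2*(a-1)*xdm + (b+c))^2 = Dg - (a-1)*((2-a)*xdm-b)^2 := by
        rw [hDg]; linear_combination (a-1)*hgxdm
      have hu : (2*(a-1)*xdm + (b+c))^2 < r ^ 2 := by
        rw [hr2]
        linarith [hid, mul_pos (show (0:ℝ) < a-1 by linarith) (pow_pos hhm 2)]
      have hru : -r < 2*(a-1)*xdm + (b+c) := by
        by_contra hcon
        push_neg at hcon
        have h6 : r ≤ -(2*(a-1)*xdm + (b+c)) := by linarith
        linarith [mul_self_le_mul_self hr0 h6, hu, sq_nonneg r]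
      rw [hz, div_lt_iff₀ ha1]
      linarith
    have hWz : (W (k+2)).eval z = z ^ (k+2) :=
      eval_W_fix a b c d W hW0 hW1 hW z hgz (k+2)
    have hzpos : 0 < (W (k+2)).eval z := by
      rw [hWz]
      have : Even (k+2) := by
        rcases hpar with ⟨j, hj⟩
        exact ⟨j+1, by omega⟩
      exact this.pow_pos (ne_of_lt hzneg)
    obtain ⟨x, hx1, hx2, hx3⟩ := poly_ivt' hzxdm hzpos hevm
    exact ⟨x, y, by linarith, hx3, hy3⟩
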